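/- Let M be a connected smooth manifold with a Riemannian metric and f : M → ℝ a smooth proper function bounded from below. Then the negative gradient flow of f is complete, i.e., for every m ∈ M the integral curve of −∇f starting at m is defined for all t ≥ 0. -/

import Mathlib

open scoped Manifold Topology
open Set Metric
open scoped Pointwise

namespace NGF

theorem pl_exists_solution {E : Type*} [NormedAddCommGroup E] [NormedSpace ℝ E] [CompleteSpace E]
    {v : E → E} {tMin tMax : ℝ} {t₀ : Set.Icc tMin tMax} (x₀ : E) {a L K : NNReal}
    (hpl : IsPicardLindelof (fun _ => v) t₀ x₀ a 0 L K) :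
    ∃ f : ℝ → E, f t₀ = x₀ ∧ ∀ t ∈ Set.Icc tMin tMax,
      HasDerivWithinAt f (v (f t)) (Set.Icc tMin tMax) t ∧ f t ∈ closedBall x₀ a := by
  have hx : x₀ ∈ closedBall x₀ ((0 : NNReal) : ℝ) := mem_closedBall_self le_rfl
  obtain ⟨α, hα⟩ := ODE.FunSpace.exists_isFixedPt_next hpl hx
  refine ⟨α.compProj, by rw [ODE.FunSpace.compProj_val, ← hα, ODE.FunSpace.next_apply₀],
    fun t ht => ⟨?_, α.compProj_mem_closedBall hpl.mul_max_le⟩⟩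
  apply ODE.hasDerivWithinAt_picard_Icc t₀.2 hpl.continuousOn_uncurry
    α.continuous_compProj.continuousOn (fun _ ht' ↦ α.compProj_mem_closedBall hpl.mul_max_le)
    x₀ ht |>.congr_of_mem _ ht
  intro t' ht'
  nth_rw 1 [← hα]
  rw [ODE.FunSpace.compProj_of_mem ht', ODE.FunSpace.next_apply]

variable
  {E : Type*} [NormedAddCommGroup E] [NormedSpace ℝ E] [CompleteSpace E]
  {H : Type*} [TopologicalSpace H] {I : ModelWithCorners ℝ E H} [I.Boundaryless]
  {M : Type*} [TopologicalSpace M] [ChartedSpace H M] [IsManifold I ((⊤ : ℕ∞) : WithTop ℕ∞) M]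

/-- Uniform-time local existence of integral curves near a point. -/
theorem exists_eps_nhds_integralCurveOn
    {v : (x : M) → TangentSpace I x}
    (hv : ContMDiff I I.tangent 1 (fun x => (⟨x, v x⟩ : TangentBundle I M)))
    (x₀ : M) :
    ∃ ε > (0:ℝ), ∃ u ∈ 𝓝 x₀, ∀ y ∈ u, ∃ γ : ℝ → M, γ 0 = y ∧
      IsMIntegralCurveOn γ v (Set.Ioo (-ε) ε) := by
  set e := extChartAt I x₀ with he
  set F : E → E := fun z =>
    ((extChartAt I.tangent (⟨x₀, v x₀⟩ : TangentBundle I M))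
      ((fun x => (⟨x, v x⟩ : TangentBundle I M)) (e.symm z))).2 with hF
  -- F is C¹ on the chart target
  have hFon : ContDiffOn ℝ 1 F e.target := by
    have h1 := (contMDiffOn_iff.mp (hv.contMDiffOn (s := e.source))).2 x₀
      (⟨x₀, v x₀⟩ : TangentBundle I M)
    have h2 : e.target ⊆ (extChartAt I x₀).target ∩ (extChartAt I x₀).symm ⁻¹'
        (e.source ∩ (fun x => (⟨x, v x⟩ : TangentBundle I M)) ⁻¹'
          (extChartAt I.tangent (⟨x₀, v x₀⟩ : TangentBundle I M)).source) := by
      intro z hz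
      refine ⟨hz, e.map_target hz, ?_⟩
      rw [mem_preimage, extChartAt_source, TangentBundle.mem_chart_source_iff]
      simpa [he, extChartAt_source] using e.map_target hz
    exact contDiff_snd.comp_contDiffOn (h1.mono h2)
  have htarget : IsOpen e.target := isOpen_extChartAt_target x₀
  set z₀ := e x₀ with hz₀def
  have hz₀ : z₀ ∈ e.target := mem_extChartAt_target x₀
  have hFz₀ : ContDiffAt ℝ 1 F z₀ := hFon.contDiffAt (htarget.mem_nhds hz₀)
  obtain ⟨L, t, htn, hlip⟩ := hFz₀.exists_lipschitzOnWith
  obtain ⟨r₁, hr₁, hball₁⟩ := Metric.mem_nhds_iff.mp htn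
  obtain ⟨r₂, hr₂, hball₂⟩ := Metric.mem_nhds_iff.mp (htarget.mem_nhds hz₀)
  obtain ⟨r₃, hr₃, hbdd⟩ := Metric.continuousAt_iff.mp hFz₀.continuousAt.norm 1 zero_lt_one
  have hbdd' : ∀ z ∈ ball z₀ r₃, ‖F z‖ ≤ 1 + ‖F z₀‖ := fun z hz =>
    sub_le_iff_le_add.mp <| le_of_lt <| lt_of_abs_lt <| Real.dist_eq _ _ ▸ hbdd hz
  set ρ := min r₁ (min r₂ r₃) / 2 with hρdef
  have hρ : 0 < ρ := by positivity
  set C := 1 + ‖F z₀‖ with hCdef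
  have hC : 0 < C := by positivity
  set R := ρ / 2 with hRdef
  have hR : 0 < R := by positivity
  set ε := R / C with hεdef
  have hε : 0 < ε := by positivity
  have hsub : closedBall z₀ ρ ⊆ t ∩ e.target ∩ ball z₀ r₃ := by
    intro z hz
    have : ρ < min r₁ (min r₂ r₃) := by
      rw [hρdef]; exact half_lt_self (by positivity)
    have hz' : z ∈ ball z₀ (min r₁ (min r₂ r₃)) := lt_of_le_of_lt hz this
    exact ⟨⟨hball₁ (ball_subset_ball (min_le_left _ _) hz'),
      hball₂ (ball_subset_ball ((min_le_right _ _).trans (min_le_left _ _)) hz')⟩,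
      ball_subset_ball ((min_le_right _ _).trans (min_le_right _ _)) hz'⟩
  refine ⟨ε, hε, e.source ∩ e ⁻¹' ball z₀ R, Filter.inter_mem (extChartAt_source_mem_nhds x₀)
    ((continuousAt_extChartAt x₀).preimage_mem_nhds (ball_mem_nhds _ hR)), ?_⟩
  rintro y ⟨hysrc, hyball⟩
  have hsub2 : closedBall (e y) R ⊆ closedBall z₀ ρ := by
    intro z hz
    rw [mem_closedBall] at hz ⊢
    calc dist z z₀ ≤ dist z (e y) + dist (e y) z₀ := dist_triangle _ _ _
      _ ≤ R + R := add_le_add hz (le_of_lt hyball)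
      _ = ρ := by rw [hRdef]; ring
  have hpl : IsPicardLindelof (fun _ => F)
      (⟨0, by constructor <;> simp [le_of_lt hε]⟩ : Set.Icc (-ε) ε) (e y) ⟨R, hR.le⟩ 0 ⟨C, hC.le⟩ L :=
    { lipschitzOnWith := fun _ _ => hlip.mono (fun z hz => (hsub (hsub2 hz)).1.1)
      continuousOn := fun _ _ => continuousOn_const
      norm_le := fun _ _ z hz => hbdd' z (hsub (hsub2 hz)).2
      mul_max_le := by
        show C * max (ε - 0) (0 - -ε) ≤ R - 0
        rw [sub_zero, zero_sub, neg_neg, max_self, sub_zero, hεdef, mul_div_cancel₀ _ (ne_of_gt hC)] }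
  obtain ⟨f, hf0', hsol⟩ := pl_exists_solution (e y) hpl
  have hf0 : f 0 = e y := hf0'
  have hmem : ∀ s ∈ Set.Icc (-ε) ε, f s ∈ e.target := fun s hs =>
    (hsub (hsub2 (hsol s hs).2)).1.2
  refine ⟨e.symm ∘ f, by simp [Function.comp_apply, hf0, e.left_inv hysrc], ?_⟩
  intro T hT
  have hTmem : T ∈ Set.Icc (-ε) ε := Ioo_subset_Icc_self hT
  have hderiv : HasDerivAt f (F (f T)) T :=
    (hsol T hTmem).1.hasDerivAt (Icc_mem_nhds hT.1 hT.2)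
  set xₜ : M := e.symm (f T) with hxₜ
  have h : HasDerivAt f (x := T) <| fderivWithin ℝ (extChartAt I x₀ ∘ (extChartAt I xₜ).symm)
      (Set.range I) (extChartAt I xₜ xₜ) (v xₜ) := hderiv
  rw [← tangentCoordChange_def] at h
  have hf3 : f T ∈ interior e.target := by rw [htarget.interior_eq]; exact hmem T hTmem
  have hf3' : f T ∈ e.target := interior_subset hf3
  have hft1 := mem_preimage.mp <|
    mem_of_mem_of_subset hf3' (extChartAt I x₀).target_subset_preimage_source
  have hft2 := mem_extChartAt_source (I := I) xₜ
  apply HasMFDerivAt.hasMFDerivWithinAt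
  refine ⟨(continuousAt_extChartAt_symm'' hf3').comp h.continuousAt, ?_⟩
  simp only [mfld_simps]
  suffices key : HasDerivAt ((extChartAt I xₜ ∘ (extChartAt I x₀).symm) ∘ f) (v xₜ) T from
    key.hasDerivWithinAt.hasFDerivWithinAt
  obtain ⟨w, hw⟩ : ∃ w : E, w = v xₜ := ⟨_, rfl⟩
  rw [← hw] at h ⊢
  rw [← tangentCoordChange_self (I := I) (x := xₜ) (z := xₜ) (v := w) hft2,
    ← tangentCoordChange_comp (x := x₀) ⟨⟨hft2, hft1⟩, hft2⟩]
  apply HasFDerivAt.comp_hasDerivAt _ _ h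
  apply HasFDerivWithinAt.hasFDerivAt (s := Set.range I) _ <|
    mem_nhds_iff.mpr ⟨interior e.target,
      subset_trans interior_subset (extChartAt_target_subset_range ..),
      isOpen_interior, hf3⟩
  rw [← (extChartAt I x₀).right_inv hf3']
  exact hasFDerivWithinAt_tangentCoordChange ⟨hft1, hft2⟩


/-- Uniform time over a compact set. -/
theorem exists_eps_of_isCompact
    {v : (x : M) → TangentSpace I x}
    (hv : ContMDiff I I.tangent 1 (fun x => (⟨x, v x⟩ : TangentBundle I M)))
    {K : Set M} (hK : IsCompact K) :
    ∃ ε > (0:ℝ), ∀ y ∈ K, ∃ γ : ℝ → M, γ 0 = y ∧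
      IsMIntegralCurveOn γ v (Set.Ioo (-ε) ε) := by
  choose ε hε u hu hcurve using fun x : M => exists_eps_nhds_integralCurveOn hv x
  obtain ⟨s, hsK, hcover⟩ := hK.elim_nhds_subcover u (fun x _ => hu x)
  rcases s.eq_empty_or_nonempty with hs | hs
  · refine ⟨1, one_pos, fun y hy => absurd (hcover hy) ?_⟩
    simp [hs]
  · refine ⟨s.inf' hs ε, ?_, ?_⟩
    · rw [gt_iff_lt, Finset.lt_inf'_iff]
      exact fun x _ => hε x
    · intro y hy
      obtain ⟨x, hx, hyu⟩ := Set.mem_iUnion₂.mp (hcover hy)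
      obtain ⟨γ, h0, hγ⟩ := hcurve x y hyu
      exact ⟨γ, h0, hγ.mono (Set.Ioo_subset_Ioo
        (neg_le_neg (Finset.inf'_le ε hx)) (Finset.inf'_le ε hx))⟩

end NGF

open Set

/-- On a connected Riemannian manifold (metric `g`, gradient `grad` of `f` defined by
`g x (grad x) v = df_x(v)`), if `f` is smooth, proper and bounded below, then the
negative gradient flow of `f` is forward complete: through each point there is an
integral curve of `−∇f` defined for all `t ≥ 0`. -/
theorem neg_gradient_flow_complete
    {m : ℕ} {M : Type*} [TopologicalSpace M] [T2Space M] [SecondCountableTopology M]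
    [ChartedSpace (EuclideanSpace ℝ (Fin m)) M]
    [IsManifold (𝓡 m) (⊤ : ℕ∞) M] [ConnectedSpace M]
    (f : M → ℝ) (hf : ContMDiff (𝓡 m) 𝓘(ℝ, ℝ) (⊤ : ℕ∞) f)
    (hproper : IsProperMap f) (hbdd : BddBelow (Set.range f))
    (g : ∀ x : M, TangentSpace (𝓡 m) x →ₗ[ℝ] TangentSpace (𝓡 m) x →ₗ[ℝ] ℝ)
    (hsymm : ∀ x u v, g x u v = g x v u)
    (hposdef : ∀ x (v : TangentSpace (𝓡 m) x), v ≠ 0 → 0 < g x v v)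
    (grad : ∀ x : M, TangentSpace (𝓡 m) x)
    (hgrad : ∀ x (v : TangentSpace (𝓡 m) x),
      g x (grad x) v = mfderiv (𝓡 m) 𝓘(ℝ, ℝ) f x v)
    (hgrad_smooth : ContMDiff (𝓡 m) ((𝓡 m).tangent) (⊤ : ℕ∞)
      (fun x : M => (⟨x, grad x⟩ : TangentBundle (𝓡 m) M))) :
    ∀ m₀ : M, ∃ γ : ℝ → M, γ 0 = m₀ ∧ ∀ t : ℝ, 0 ≤ t →
      HasMFDerivAt 𝓘(ℝ, ℝ) (𝓡 m) γ t
        ((1 : ℝ →L[ℝ] ℝ).smulRight (-grad (γ t))) := by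
  intro m₀
  set V : ∀ x : M, TangentSpace (𝓡 m) x := fun x => -grad x with hVdef
  -- smoothness of the negative gradient field
  have hVsm : ContMDiff (𝓡 m) ((𝓡 m).tangent) 1
      (fun x : M => (⟨x, V x⟩ : TangentBundle (𝓡 m) M)) := by
    let sigma : Cₛ^(⊤ : ℕ∞)⟮𝓡 m; EuclideanSpace ℝ (Fin m), TangentSpace (𝓡 m)⟯ :=
      ⟨grad, hgrad_smooth⟩
    have h := (-sigma).contMDiff
    have hcoe : ⇑(-sigma) = fun x => -grad x := by
      rw [ContMDiffSection.coe_neg]; rfl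
    rw [hcoe] at h
    exact h.of_le (by exact_mod_cast le_top)
  -- the compact sublevel set
  set c := sInf (Set.range f) with hc
  set K := f ⁻¹' (Set.Icc c (f m₀)) with hK
  have hKc : IsCompact K := hproper.isCompact_preimage isCompact_Icc
  obtain ⟨ε, hε, hloc⟩ := NGF.exists_eps_of_isCompact hVsm hKc
  -- f is nonincreasing along integral curves of V
  have hval : ∀ x : M, g x (grad x) (V x) ≤ 0 := by
    intro x
    have h1 : g x (grad x) (V x) = -(g x (grad x) (grad x)) := by
      show g x (grad x) (-grad x) = _
      rw [map_neg]
    rw [h1, neg_nonpos]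
    rcases eq_or_ne (grad x) 0 with h | h
    · rw [h]; simp
    · exact (hposdef x _ h).le
  have hanti : ∀ (γ : ℝ → M) (a b : ℝ), IsMIntegralCurveOn γ V (Set.Ioo a b) →
      AntitoneOn (f ∘ γ) (Set.Ioo a b) := by
    intro γ a b hγ
    have hd : ∀ t ∈ Set.Ioo a b,
        HasDerivAt (f ∘ γ) (g (γ t) (grad (γ t)) (V (γ t))) t := by
      intro t ht
      have hcomp := HasMFDerivAt.comp t
        ((hf.mdifferentiable (by simp) (γ t)).hasMFDerivAt) ((hγ t ht).hasMFDerivAt (Ioo_mem_nhds ht.1 ht.2))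
      have hda : HasDerivAt (f ∘ γ)
          (((mfderiv (𝓡 m) 𝓘(ℝ, ℝ) f (γ t)).comp ((1 : ℝ →L[ℝ] ℝ).smulRight (V (γ t)))) 1) t :=
        hasDerivAt_iff_hasFDerivAt.mpr ((hasMFDerivAt_iff_hasFDerivAt.mp hcomp).congr_fderiv
          (by ext; exact (one_smul ℝ _).symm))
      refine hda.congr_deriv (Eq.symm ?_)
      show g (γ t) (grad (γ t)) (V (γ t)) =
        mfderiv (𝓡 m) 𝓘(ℝ, ℝ) f (γ t) ((1:ℝ) • V (γ t))
      rw [one_smul, hgrad]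
    apply antitoneOn_of_deriv_nonpos (convex_Ioo a b)
    · exact hf.continuous.comp_continuousOn hγ.continuousOn
    · intro t ht
      rw [interior_Ioo] at ht
      exact ((hd t ht).differentiableAt).differentiableWithinAt
    · intro t ht
      rw [interior_Ioo] at ht
      rw [(hd t ht).deriv]
      exact hval (γ t)
  have hmemK : ∀ (γ : ℝ → M) {b t : ℝ}, γ 0 = m₀ →
      IsMIntegralCurveOn γ V (Set.Ioo (-ε) b) → t ∈ Set.Ioo (-ε) b → 0 ≤ t → γ t ∈ K := by
    intro γ b t h0 hγ ht ht0
    have h0m : (0:ℝ) ∈ Set.Ioo (-ε) b := ⟨by linarith, lt_of_le_of_lt ht0 ht.2⟩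
    have hle := hanti γ _ _ hγ h0m ht ht0
    exact ⟨csInf_le hbdd ⟨_, rfl⟩, by rw [← h0]; exact hle⟩
  -- the main claim: curves of arbitrarily long forward time
  have claim : ∀ a : ℝ, ∃ γ : ℝ → M, γ 0 = m₀ ∧ IsMIntegralCurveOn γ V (Set.Ioo (-ε) a) := by
    by_contra hcon
    push_neg at hcon
    obtain ⟨a₀, ha₀⟩ := hcon
    set A := {a : ℝ | ∃ γ : ℝ → M, γ 0 = m₀ ∧ IsMIntegralCurveOn γ V (Set.Ioo (-ε) a)} with hA
    have hm₀K : m₀ ∈ K := ⟨csInf_le hbdd ⟨m₀, rfl⟩, le_rfl⟩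
    have hεA : ε ∈ A := hloc m₀ hm₀K
    have hAbdd : BddAbove A := by
      refine ⟨a₀, fun b hb => ?_⟩
      by_contra hab
      push_neg at hab
      obtain ⟨γ, h0, hγ⟩ := hb
      exact ha₀ γ h0 (hγ.mono (Set.Ioo_subset_Ioo le_rfl hab.le))
    set T := sSup A with hT
    have hεT : ε ≤ T := le_csSup hAbdd hεA
    obtain ⟨a, haA, hlt⟩ := Real.add_neg_lt_sSup ⟨ε, hεA⟩ (ε := -(ε/4)) (by linarith)
    rw [← hT, ← sub_eq_add_neg] at hlt
    obtain ⟨γ, hγ0, hγ⟩ := haA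
    set t₁ := a - ε/4 with ht₁def
    have haT : a ≤ T := le_csSup hAbdd (by exact ⟨γ, hγ0, hγ⟩)
    have ht₁ : t₁ ∈ Set.Ioo (-ε) a := ⟨by simp only [ht₁def]; linarith, by simp only [ht₁def]; linarith⟩
    have hKt₁ : γ t₁ ∈ K := hmemK γ hγ0 hγ ht₁ (by simp only [ht₁def]; linarith)
    obtain ⟨α, hα0, hα⟩ := hloc (γ t₁) hKt₁
    set β := α ∘ (· - t₁) with hβdef
    have hβ : IsMIntegralCurveOn β V (Set.Ioo (t₁ - ε) (t₁ + ε)) := by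
      have h1 := (isMIntegralCurveOn_comp_sub (dt := t₁)).mpr hα
      have hset : {x | x - t₁ ∈ Set.Ioo (-ε) ε} = Set.Ioo (t₁ - ε) (t₁ + ε) := by
        ext x
        simp only [Set.mem_setOf_eq, Set.mem_Ioo]
        constructor <;> rintro ⟨h1, h2⟩ <;> constructor <;> linarith
      rwa [hset] at h1
    have hβt₁ : γ t₁ = β t₁ := by simp [hβdef, hα0]
    have hglue := isMIntegralCurveOn_piecewise hVsm hγ hβ
      ⟨ht₁, ⟨by linarith [ht₁.1, hε], by linarith [hε]⟩⟩ hβt₁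
    have h0mem : (0:ℝ) ∈ Set.Ioo (-ε) a := ⟨by linarith, by linarith [ht₁.1, hε]⟩
    have hnew : t₁ + ε ∈ A := by
      refine ⟨Set.piecewise (Set.Ioo (-ε) a) γ β, ?_, hglue.mono ?_⟩
      · rw [Set.piecewise_eq_of_mem _ _ _ h0mem, hγ0]
      · intro x hx
        by_cases hxa : x < a
        · exact Or.inl ⟨hx.1, hxa⟩
        · exact Or.inr ⟨by push_neg at hxa; simp only [ht₁def]; linarith, hx.2⟩
    have := le_csSup hAbdd hnew
    simp only [ht₁def] at this
    linarith
  choose γc hγc0 hγc using claim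
  refine ⟨fun t => γc (|t| + 1) t, ?_, ?_⟩
  · show γc (|(0:ℝ)| + 1) 0 = m₀
    norm_num
    exact hγc0 1
  · intro t ht
    have htm : t ∈ Set.Ioo (-ε) (t + 2) := ⟨by linarith, by linarith⟩
    -- the extension agrees with `γc (t+2)` near `t`
    have heq : Set.EqOn (fun s => γc (|s| + 1) s) (γc (t + 2))
        (Set.Ioo (max (t - ε/2) (-(ε/2))) (t + 1)) := by
      intro s hs
      have hs1 : -ε < s := by
        have := hs.1
        have h2 : -(ε/2) < s := lt_of_le_of_lt (le_max_right _ _) this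
        linarith
      have hs2 : s < |s| + 1 := lt_of_le_of_lt (le_abs_self s) (lt_add_one _)
      have hs3 : s < t + 2 := by linarith [hs.2]
      set b := min (|s| + 1) (t + 2) with hb
      have hsb : s ∈ Set.Ioo (-ε) b := ⟨hs1, lt_min hs2 hs3⟩
      have h0b : (0:ℝ) ∈ Set.Ioo (-ε) b := by
        refine ⟨by linarith, lt_min (by positivity) (by linarith)⟩
      have := isMIntegralCurveOn_Ioo_eqOn_of_contMDiff_boundaryless h0b hVsm
        ((hγc (|s| + 1)).mono (Set.Ioo_subset_Ioo le_rfl (min_le_left _ _)))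
        ((hγc (t + 2)).mono (Set.Ioo_subset_Ioo le_rfl (min_le_right _ _)))
        (by rw [hγc0, hγc0])
      exact this hsb
    have hne : Set.Ioo (max (t - ε/2) (-(ε/2))) (t + 1) ∈ 𝓝 t := by
      refine Ioo_mem_nhds ?_ (by linarith)
      rw [max_lt_iff]
      constructor <;> linarith
    have hteq : γc (|t| + 1) t = γc (t + 2) t := heq (mem_of_mem_nhds hne)
    have hder := (hγc (t + 2) t htm).hasMFDerivAt (Ioo_mem_nhds htm.1 htm.2)
    show HasMFDerivAt 𝓘(ℝ, ℝ) (𝓡 m) (fun s => γc (|s| + 1) s) t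
      ((1 : ℝ →L[ℝ] ℝ).smulRight (-grad (γc (|t| + 1) t)))
    rw [hteq]
    exact hder.congr_of_eventuallyEq (Filter.eventuallyEq_of_mem hne heq)
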